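/- Let V ⊆ P^m be an irreducible projective variety of dimension n over an algebraically closed field, and let Q_1, ..., Q_{n+1} be homogeneous polynomials of common degree d with V ∩ {Q_1 = 0} ∩ ... ∩ {Q_{n+1} = 0} = ∅. Then the morphism Φ: V → P^n given by Φ(x) = (Q_1(x) : ... : Q_{n+1}(x)) is a well-defined finite morphism; in particular Φ(V) has dimension n. -/

import Mathlib

set_option maxHeartbeats 1000000
set_option synthInstance.maxHeartbeats 400000

open MvPolynomial

private lemma homogComp_mul {σ K : Type*} [CommRing K] {Q : MvPolynomial σ K} {d : ℕ}
    (hQ : Q.IsHomogeneous d) (c : MvPolynomial σ K) (e : ℕ) :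
    homogeneousComponent (e + d) (c * Q) = homogeneousComponent e c * Q := by
  induction c using MvPolynomial.induction_on' with
  | add p q hp hq =>
    rw [add_mul, map_add, map_add, hp, hq, add_mul]
  | monomial u a =>
    have hmon : (monomial u a).IsHomogeneous u.degree := isHomogeneous_monomial a rfl
    have hprod : ((monomial u a) * Q).IsHomogeneous (u.degree + d) := hmon.mul hQ
    rw [homogeneousComponent_of_mem ((mem_homogeneousSubmodule _ _).2 hprod),
      homogeneousComponent_of_mem ((mem_homogeneousSubmodule _ _).2 hmon)]
    by_cases h : e = u.degree
    · subst h; simp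
    · have h' : e + d ≠ u.degree + d := by omega
      simp [h, h']

private theorem phi_finite {K : Type*} [Field K] [IsAlgClosed K] (m n d : ℕ) (hd : 1 ≤ d)
    (I : Ideal (MvPolynomial (Fin (m + 1)) K))
    (hhomI : ∀ f ∈ I, ∀ e : ℕ, MvPolynomial.homogeneousComponent e f ∈ I)
    (Q : Fin (n + 1) → MvPolynomial (Fin (m + 1)) K)
    (hQhom : ∀ j, (Q j).IsHomogeneous d)
    (hempty : ∀ x : Fin (m + 1) → K, x ≠ 0 → (∀ f ∈ I, MvPolynomial.eval x f = 0) →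
      ∃ j, MvPolynomial.eval x (Q j) ≠ 0) :
    (MvPolynomial.eval₂Hom ((Ideal.Quotient.mk I).comp MvPolynomial.C)
        fun j => Ideal.Quotient.mk I (Q j)).Finite := by
  classical
  have hS : True := trivial
  let S := MvPolynomial (Fin (m + 1)) K
  let R := MvPolynomial (Fin (n + 1)) K
  let A := S ⧸ I
  let mkI : S →+* A := Ideal.Quotient.mk I
  let φ : R →+* A := MvPolynomial.eval₂Hom (mkI.comp MvPolynomial.C)
      (fun j => mkI (Q j))
  have hφ : φ = MvPolynomial.eval₂Hom (mkI.comp MvPolynomial.C) (fun j => mkI (Q j)) := rfl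
  -- every X i lies in the radical of J := I + (Q₀,…,Qₙ)
  let J : Ideal S := I ⊔ Ideal.span (Set.range Q)
  have hJ : J = I ⊔ Ideal.span (Set.range Q) := rfl
  have hrad : ∀ i : Fin (m + 1), (X i : S) ∈ J.radical := by
    intro i
    rw [hJ, ← vanishingIdeal_zeroLocus_eq_radical (K := K)]
    intro x hx
    have hx0 : x = 0 := by
      by_contra h
      obtain ⟨j, hj⟩ := hempty x h (fun f hf => hx f (Ideal.mem_sup_left hf))
      exact hj (hx (Q j) (Ideal.mem_sup_right (Ideal.subset_span ⟨j, rfl⟩)))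
    subst hx0
    simp
  choose k hk using fun i => Ideal.mem_radical_iff.mp (hrad i)
  let N : ℕ := d + 1 + Finset.univ.sup k
  have hN : N = d + 1 + Finset.univ.sup k := rfl
  have hkN : ∀ i, k i ≤ N := fun i =>
    le_trans (Finset.le_sup (Finset.mem_univ i)) (by omega)
  have hXN : ∀ i, (X i : S) ^ N ∈ J := by
    intro i
    have hsplit : (X i : S) ^ N = X i ^ (N - k i) * X i ^ k i := by
      rw [← pow_add]; congr 1; have := hkN i; omega
    rw [hsplit]; exact J.mul_mem_left _ (hk i)
  let N' : ℕ := (m + 1) * N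
  have hN' : N' = (m + 1) * N := rfl
  have hNN' : N ≤ N' := Nat.le_mul_of_pos_left N (by omega)
  letI : Algebra R A := φ.toAlgebra
  let gen : Set A := (fun s : Fin (m + 1) →₀ ℕ => mkI (monomial s 1)) ''
      {s : Fin (m + 1) →₀ ℕ | s.degree < N'}
  have halgmap : ∀ r : R, algebraMap R A r = φ r := fun _ => rfl
  -- a polynomial all of whose monomials map into the span also maps into the span
  have hpoly : ∀ f : S, (∀ s ∈ f.support, mkI (monomial s 1) ∈ Submodule.span R gen) →
      mkI f ∈ Submodule.span R gen := by
    intro f hf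
    rw [show f = ∑ v ∈ f.support, monomial v (coeff v f) from f.as_sum, map_sum]
    apply Submodule.sum_mem
    intro s hs
    have hsm : (C (coeff s f) : R) • mkI (monomial s 1) = mkI (monomial s (coeff s f)) := by
      rw [Algebra.smul_def, halgmap, hφ, eval₂Hom_C, RingHom.comp_apply,
        ← map_mul, C_mul_monomial, mul_one]
    rw [← hsm]
    exact Submodule.smul_mem _ _ (hf s hs)
  -- key: every monomial image lies in the span of the small monomials
  have key : ∀ e : ℕ, ∀ s : Fin (m + 1) →₀ ℕ, s.degree = e →
      mkI (monomial s 1) ∈ Submodule.span R gen := by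
    intro e
    induction e using Nat.strong_induction_on with
    | _ e IH =>
      intro s hs
      by_cases hsmall : s.degree < N'
      · exact Submodule.subset_span ⟨s, hsmall, rfl⟩
      push_neg at hsmall
      have hse : N' ≤ e := hs ▸ hsmall
      -- pigeonhole: some exponent is at least N
      have hex : ∃ i, N ≤ s i := by
        by_contra hcon; push_neg at hcon
        have hdeg : s.degree = ∑ i : Fin (m + 1), s i :=
          Finset.sum_subset (Finset.subset_univ _)
            (fun i _ hi => Finsupp.notMem_support_iff.mp hi)
        have hle : ∑ i : Fin (m + 1), s i ≤ ∑ _i : Fin (m + 1), (N - 1) :=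
          Finset.sum_le_sum fun i _ => by have := hcon i; omega
        rw [Finset.sum_const, Finset.card_univ, Fintype.card_fin, smul_eq_mul] at hle
        have hfull : (m + 1) * N ≤ (m + 1) * (N - 1) := le_trans (hdeg ▸ hsmall) hle
        have := Nat.le_of_mul_le_mul_left hfull (by omega)
        omega
      obtain ⟨i, hi⟩ := hex
      -- the monomial lies in J
      have hmemJ : (monomial s (1 : K) : S) ∈ J := by
        have hfact : (monomial s (1 : K) : S) = monomial (s - Finsupp.single i N) 1 * X i ^ N := by
          rw [X_pow_eq_monomial, monomial_mul, one_mul,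
            tsub_add_cancel_of_le (Finsupp.single_le_iff.mpr hi)]
        rw [hfact]; exact J.mul_mem_left _ (hXN i)
      rw [hJ] at hmemJ
      obtain ⟨g, hgI, t, htJ, hgt⟩ := Submodule.mem_sup.mp hmemJ
      obtain ⟨c, hc⟩ := Ideal.mem_span_range_iff_exists_fun.mp htJ
      -- homogeneous decomposition in degree e
      have h1 : homogeneousComponent e (monomial s (1 : K) : S) = monomial s 1 := by
        rw [homogeneousComponent_of_mem
          ((mem_homogeneousSubmodule _ _).2 (isHomogeneous_monomial (1 : K) hs)), if_pos rfl]
      have hrepr : (monomial s (1 : K) : S) =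
          homogeneousComponent e g + ∑ j, homogeneousComponent (e - d) (c j) * Q j := by
        have h2 : g + ∑ j, c j * Q j = monomial s (1 : K) := by rw [hc, hgt]
        conv_lhs => rw [← h1, ← h2]
        rw [map_add, map_sum]
        congr 1
        refine Finset.sum_congr rfl fun j _ => ?_
        have he : e - d + d = e := by omega
        calc homogeneousComponent e (c j * Q j)
            = homogeneousComponent (e - d + d) (c j * Q j) := by rw [he]
          _ = homogeneousComponent (e - d) (c j) * Q j := homogComp_mul (hQhom j) (c j) (e - d)
      -- pass to the quotient
      have hmk : mkI (monomial s (1 : K)) =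
          ∑ j, (X j : R) • mkI (homogeneousComponent (e - d) (c j)) := by
        conv_lhs => rw [hrepr]
        rw [map_add, map_sum, Ideal.Quotient.eq_zero_iff_mem.mpr (hhomI g hgI e), zero_add]
        refine Finset.sum_congr rfl fun j _ => ?_
        rw [map_mul, Algebra.smul_def, halgmap, hφ, eval₂Hom_X', mul_comm]
      rw [hmk]
      refine Submodule.sum_mem _ fun j _ => Submodule.smul_mem _ _ (hpoly _ fun t ht => ?_)
      have htd : t.degree = e - d := by
        by_contra hne
        exact (mem_support_iff.mp ht)
          ((homogeneousComponent_isHomogeneous (e - d) (c j)).coeff_eq_zero hne)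
      exact IH (e - d) (by omega) t htd
  -- conclude finiteness
  show Module.Finite R A
  rw [Module.finite_def, Submodule.fg_def]
  refine ⟨gen, ?_, ?_⟩
  · refine Set.Finite.image _ (Set.Finite.subset (Set.finite_range
      (fun g : Fin (m + 1) → Fin (N' + 1) => Finsupp.equivFunOnFinite.symm fun i => (g i : ℕ)))
      fun s hs => ?_)
    refine ⟨fun i => ⟨s i, lt_of_le_of_lt (Finsupp.le_degree i s) (Nat.lt_succ_of_lt hs)⟩, ?_⟩
    exact Finsupp.equivFunOnFinite.symm_apply_apply s
  · rw [eq_top_iff]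
    rintro a -
    obtain ⟨f, rfl⟩ := Ideal.Quotient.mk_surjective a
    exact hpoly f fun s _ => key s.degree s rfl


private lemma krullDim_eq_of_injective_integral {B A : Type*} [CommRing B] [CommRing A]
    [Nontrivial A] (ψ : B →+* A) (hinj : Function.Injective ψ) (hfin : ψ.Finite) :
    ringKrullDim B = ringKrullDim A := by
  letI : Algebra B A := ψ.toAlgebra
  haveI : Module.Finite B A := hfin
  haveI : Algebra.IsIntegral B A := Algebra.IsIntegral.of_finite B A
  haveI : Nontrivial B := by
    refine ⟨0, 1, fun h => ?_⟩
    have := congrArg ψ h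
    simp only [map_zero, map_one] at this
    exact zero_ne_one this
  have hker : RingHom.ker (algebraMap B A) = ⊥ := by
    rw [show algebraMap B A = ψ from rfl]
    exact (RingHom.injective_iff_ker_eq_bot ψ).1 hinj
  -- lifting chains : going up
  have lift : ∀ k : ℕ, ∀ p : LTSeries (PrimeSpectrum B), p.length = k →
      ∃ q : LTSeries (PrimeSpectrum A), q.length = k ∧
        q.last.asIdeal.comap (algebraMap B A) = p.last.asIdeal := by
    intro k
    induction k with
    | zero =>
      intro p _
      haveI := p.last.2
      obtain ⟨Q0, -, hQp, hQc⟩ := Ideal.exists_ideal_over_prime_of_isIntegral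
        p.last.asIdeal ⊥ (by
          have : (⊥ : Ideal A).comap (algebraMap B A) = ⊥ := by
            rw [← RingHom.ker_eq_comap_bot, hker]
          rw [this]; exact bot_le)
      exact ⟨RelSeries.singleton _ ⟨Q0, hQp⟩, rfl, hQc⟩
    | succ k IH =>
      intro p hp
      obtain ⟨q, hqlen, hqlast⟩ := IH p.eraseLast (by simp [hp])
      have hlt : p.eraseLast.last < p.last := p.eraseLast_last_rel_last (by omega)
      haveI := p.last.2
      haveI := q.last.2
      obtain ⟨Q', hQ'ge, hQ'p, hQ'c⟩ := Ideal.exists_ideal_over_prime_of_isIntegral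
        p.last.asIdeal q.last.asIdeal
        (by rw [hqlast]; exact le_of_lt ((PrimeSpectrum.asIdeal_lt_asIdeal _ _).2 hlt))
      have hstrict : q.last < (⟨Q', hQ'p⟩ : PrimeSpectrum A) := by
        rw [← PrimeSpectrum.asIdeal_lt_asIdeal]
        refine lt_of_le_of_ne hQ'ge fun h => ?_
        apply ne_of_lt ((PrimeSpectrum.asIdeal_lt_asIdeal _ _).2 hlt)
        rw [← hqlast, h, hQ'c]
      refine ⟨q.snoc _ hstrict, by simp [hqlen], ?_⟩
      rw [RelSeries.last_snoc]
      exact hQ'c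
  apply le_antisymm
  · -- dim B ≤ dim A
    rw [ringKrullDim, ringKrullDim, Order.krullDim, Order.krullDim]
    refine iSup_le fun p => ?_
    obtain ⟨q, hqlen, -⟩ := lift p.length p rfl
    rw [← hqlen]
    exact le_iSup (fun r : LTSeries (PrimeSpectrum A) => (r.length : WithBot ℕ∞)) q
  · -- dim A ≤ dim B via comap strictly monotone
    rw [ringKrullDim, ringKrullDim]
    refine Order.krullDim_le_of_strictMono
      (fun p : PrimeSpectrum A =>
        ⟨p.asIdeal.comap (algebraMap B A), p.asIdeal.comap_isPrime _⟩) ?_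
    intro p q hpq
    rw [← PrimeSpectrum.asIdeal_lt_asIdeal] at hpq ⊢
    obtain ⟨hle, x, hxq, hxp⟩ := SetLike.lt_iff_le_and_exists.1 hpq
    haveI := p.2
    exact Ideal.comap_lt_comap_of_integral_mem_sdiff hle ⟨hxq, hxp⟩
      (Algebra.IsIntegral.isIntegral x)


/-- Let `V ⊆ ℙ^m` be an irreducible projective variety of
dimension `n` over an algebraically closed field `K` (given by a homogeneous
prime ideal `I` whose affine cone has Krull dimension `n+1`), and let
`Q_0, …, Q_n` be homogeneous polynomials of common degree `d` with no common
zero on `V`. Then the morphism `Φ : V → ℙ^n`, `Φ(x) = (Q_0(x) : ⋯ : Q_n(x))`,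
corresponding to the ring homomorphism `φ : K[y_0,…,y_n] → K[x]/I`,
`y_j ↦ Q_j mod I`, is a finite morphism; in particular the image `Φ(V)`
(with homogeneous ideal `ker φ`) has dimension `n`. -/
theorem finite_morphism_from_no_common_zero
    {K : Type*} [Field K] [IsAlgClosed K] (m n d : ℕ) (hd : 1 ≤ d)
    (I : Ideal (MvPolynomial (Fin (m + 1)) K)) (hprime : I.IsPrime)
    (hhomI : ∀ f ∈ I, ∀ e : ℕ, MvPolynomial.homogeneousComponent e f ∈ I)
    (hdim : ringKrullDim (MvPolynomial (Fin (m + 1)) K ⧸ I) = (n + 1 : ℕ))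
    (Q : Fin (n + 1) → MvPolynomial (Fin (m + 1)) K)
    (hQhom : ∀ j, (Q j).IsHomogeneous d)
    (hempty : ∀ x : Fin (m + 1) → K, x ≠ 0 → (∀ f ∈ I, MvPolynomial.eval x f = 0) →
      ∃ j, MvPolynomial.eval x (Q j) ≠ 0) :
    (MvPolynomial.eval₂Hom ((Ideal.Quotient.mk I).comp MvPolynomial.C)
        fun j => Ideal.Quotient.mk I (Q j)).Finite ∧
      ringKrullDim (MvPolynomial (Fin (n + 1)) K ⧸
        RingHom.ker (MvPolynomial.eval₂Hom ((Ideal.Quotient.mk I).comp MvPolynomial.C)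
          fun j => Ideal.Quotient.mk I (Q j))) = (n + 1 : ℕ) := by
  haveI := hprime
  have hfin := phi_finite m n d hd I hhomI Q hQhom hempty
  refine ⟨hfin, ?_⟩
  haveI : Nontrivial (MvPolynomial (Fin (m + 1)) K ⧸ I) :=
    Ideal.Quotient.nontrivial_iff.mpr hprime.ne_top
  set φ := MvPolynomial.eval₂Hom ((Ideal.Quotient.mk I).comp MvPolynomial.C)
      fun j => Ideal.Quotient.mk I (Q j) with hφ
  have hcomp : (RingHom.kerLift φ).comp (Ideal.Quotient.mk (RingHom.ker φ)) = φ :=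
    RingHom.ext fun x => RingHom.kerLift_mk φ x
  have hfinψ : (RingHom.kerLift φ).Finite :=
    RingHom.Finite.of_comp_finite (f := Ideal.Quotient.mk (RingHom.ker φ))
      (by rw [hcomp]; exact hfin)
  rw [krullDim_eq_of_injective_integral (RingHom.kerLift φ)
    (RingHom.kerLift_injective φ) hfinψ]
  exact hdim
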